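/- Let S, z : Finset ℂ with (↑z : Set ℂ) ∩ (↑S : Set ℂ) = ∅, let C be the subtype {w : ℂ // w ∉ S} with the subspace topology, and let X := (ℝ × ℝ) × C. Let G be a topological group which is simply connected (SimplyConnectedSpace G). Then for every continuous map g : C(X, G) such that g (p, c) = 1 for every p ∈ ℝ × ℝ and every c : C with (c : ℂ) ∈ z, there exists a homotopy relative to the set (Set.univ : Set (ℝ × ℝ)) ×ˢ {c : C | (c : ℂ) ∈ z} between g and the constant map with value 1. -/

import Mathlib

open Set Metric unitInterval Complex

noncomputable section AuxNull

/-- fractional angle in `[0,1)` -/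
noncomputable def afrac (v : ℂ) : ℝ := Int.fract (Complex.arg v / (2 * Real.pi))

lemma afrac_nonneg (v : ℂ) : 0 ≤ afrac v := Int.fract_nonneg _
lemma afrac_lt_one (v : ℂ) : afrac v < 1 := Int.fract_lt_one _
lemma afrac_mem (v : ℂ) : afrac v ∈ Set.Icc (0:ℝ) 1 :=
  ⟨afrac_nonneg v, (afrac_lt_one v).le⟩

lemma exp_afrac (v : ℂ) : (‖v‖ : ℂ) * Complex.exp ((2 * Real.pi * afrac v : ℝ) * Complex.I) = v := by
  have h1 : (2 * Real.pi * afrac v : ℝ) = Complex.arg v - 2 * Real.pi * (⌊Complex.arg v / (2 * Real.pi)⌋ : ℝ) := by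
    unfold afrac Int.fract
    have hπ : (2 * Real.pi) ≠ 0 := by positivity
    field_simp
  rw [h1]
  push_cast
  rw [sub_mul, Complex.exp_sub]
  have h2 : Complex.exp ((2 * Real.pi * (⌊Complex.arg v / (2 * Real.pi)⌋ : ℂ)) * Complex.I) = 1 := by
    have := Complex.exp_int_mul_two_pi_mul_I ⌊Complex.arg v / (2 * Real.pi)⌋
    rw [← this]
    ring_nf
  rw [h2, div_one]
  exact Complex.norm_mul_exp_arg_mul_I v

lemma afrac_r_exp (r θ : ℝ) (hr : 0 < r) :
    afrac ((r : ℂ) * Complex.exp ((2 * Real.pi * θ : ℝ) * Complex.I)) = Int.fract θ := by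
  set v : ℂ := (r : ℂ) * Complex.exp ((2 * Real.pi * θ : ℝ) * Complex.I) with hv
  have habs : ‖v‖ = r := by
    rw [hv, norm_mul, Complex.norm_exp_ofReal_mul_I, Complex.norm_real, Real.norm_eq_abs, abs_of_pos hr, mul_one]
  have hve := exp_afrac v
  rw [habs] at hve
  have hr' : (r : ℂ) ≠ 0 := by exact_mod_cast hr.ne'
  have hexp : Complex.exp ((2 * Real.pi * afrac v : ℝ) * Complex.I)
      = Complex.exp ((2 * Real.pi * θ : ℝ) * Complex.I) := by
    have := hve.trans hv
    exact mul_left_cancel₀ hr' this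
  obtain ⟨n, hn⟩ := Complex.exp_eq_exp_iff_exists_int.mp hexp
  have hre : (2 * Real.pi * afrac v) = 2 * Real.pi * θ + n * (2 * Real.pi) := by
    have him := congrArg Complex.im hn
    push_cast at him
    simpa using him
  have : afrac v = θ + n := by
    have hπ : (2 * Real.pi) ≠ 0 := by positivity
    field_simp at hre
    nlinarith [Real.pi_pos]
  have hfr : Int.fract (afrac v) = afrac v :=
    Int.fract_eq_self.mpr ⟨afrac_nonneg v, afrac_lt_one v⟩
  rw [← hfr, this, Int.fract_add_intCast]

end AuxNull

section AuxList

set_option linter.unusedSectionVars false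
variable {ι : Type*} {X M : Type*} [TopologicalSpace X] [Monoid M] [TopologicalSpace M]
  [ContinuousMul M]

lemma list_prod_continuous (l : List ι) (F : ι → X → M) (hF : ∀ i, Continuous (F i)) :
    Continuous (fun x => (l.map (fun i => F i x)).prod) := by
  induction l with
  | nil => simpa using continuous_const
  | cons a l ih =>
      simp only [List.map_cons, List.prod_cons]
      exact (hF a).mul ih

lemma list_prod_eq_one (l : List ι) (F : ι → M) (h : ∀ i ∈ l, F i = 1) :
    (l.map F).prod = 1 := by
  induction l with
  | nil => simp
  | cons a l ih =>
      simp only [List.map_cons, List.prod_cons, h a (by simp), one_mul]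
      exact ih fun i hi => h i (by simp [hi])

lemma list_prod_eq_single (l : List ι) (hl : l.Nodup) (F : ι → M) (a : ι) (ha : a ∈ l)
    (h : ∀ b ∈ l, b ≠ a → F b = 1) : (l.map F).prod = F a := by
  induction l with
  | nil => simp at ha
  | cons c l ih =>
      simp only [List.map_cons, List.prod_cons]
      rcases List.mem_cons.mp ha with rfl | ha'
      · rw [list_prod_eq_one l F fun i hi => h i (List.mem_cons_of_mem _ hi)
          (fun he => (List.nodup_cons.mp hl).1 (he ▸ hi)), mul_one]
      · rw [h c List.mem_cons_self (fun he => (List.nodup_cons.mp hl).1 (he ▸ ha')),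
          one_mul]
        exact ih (List.nodup_cons.mp hl).2 ha' fun b hb => h b (List.mem_cons_of_mem _ hb)

end AuxList

lemma exists_gap (S : Finset ℂ) : ∃ ε : ℝ, 0 < ε ∧
    ∀ s ∈ S, ∀ t ∈ S, s ≠ t → 2 * ε < dist s t := by
  classical
  set P := (S ×ˢ S).filter (fun p => p.1 ≠ p.2) with hP
  rcases P.eq_empty_or_nonempty with h | h
  · exact ⟨1, one_pos, fun s hs t ht hst => absurd (Finset.eq_empty_iff_forall_notMem.mp h (s,t))
      (by simp [hP, Finset.mem_filter, Finset.mem_product, hs, ht, hst])⟩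
  · obtain ⟨p, hp, hmin⟩ := Finset.exists_min_image P (fun p => dist p.1 p.2) h
    have hne : p.1 ≠ p.2 := (Finset.mem_filter.mp hp).2
    have hpos : 0 < dist p.1 p.2 := dist_pos.mpr hne
    refine ⟨dist p.1 p.2 / 3, by positivity, fun s hs t ht hst => ?_⟩
    have : dist p.1 p.2 ≤ dist s t := hmin (s,t)
      (by simp [hP, Finset.mem_filter, Finset.mem_product, hs, ht, hst])
    linarith

noncomputable def pj (x : ℝ) : I := Set.projIcc 0 1 zero_le_one x

lemma continuous_pj : Continuous pj := by unfold pj; exact continuous_projIcc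

lemma pj_coe (t : I) : pj (t : ℝ) = t := by
  rw [pj, Set.projIcc_of_mem zero_le_one t.2]

lemma pj_zero : pj 0 = 0 := pj_coe 0
lemma pj_one : pj 1 = 1 := pj_coe 1


lemma afrac_zero : afrac 0 = 0 := by simp [afrac, Complex.arg_zero]

lemma cone_continuousOn {Y : Type*} [TopologicalSpace Y] (s : ℂ) (ε : ℝ) (hε : 0 < ε)
    (A : C(I × I, Y)) (hper : ∀ sg : I, A (sg, 0) = A (sg, 1))
    (hcenter : ∀ θ θ' : I, A (1, θ) = A (1, θ')) :
    ContinuousOn (fun w : ℂ => A (pj (1 - dist w s / ε), pj (afrac (w - s))))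
      (closedBall s ε) := by
  rw [continuousOn_iff_continuous_restrict]
  have hmem : ∀ q : I × I,
      s + ((ε * (1 - (q.1 : ℝ)) : ℝ) : ℂ) * Complex.exp ((2 * Real.pi * (q.2 : ℝ) : ℝ) * Complex.I)
        ∈ closedBall s ε := by
    intro q
    rw [mem_closedBall, Complex.dist_eq]
    have h1 : 0 ≤ ε * (1 - (q.1 : ℝ)) := by
      have := q.1.2.2; have := q.1.2.1; nlinarith
    calc ‖s + _ - s‖ = ‖(((ε * (1 - (q.1 : ℝ)) : ℝ) : ℂ) *
        Complex.exp ((2 * Real.pi * (q.2 : ℝ) : ℝ) * Complex.I))‖ := by ring_nf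
      _ = ε * (1 - (q.1 : ℝ)) := by
          rw [norm_mul, Complex.norm_exp_ofReal_mul_I, Complex.norm_real, Real.norm_eq_abs, _root_.abs_of_nonneg h1, mul_one]
      _ ≤ ε := by have := q.1.2.1; nlinarith
  set Φ : I × I → ↥(closedBall s ε) := fun q =>
    ⟨s + ((ε * (1 - (q.1 : ℝ)) : ℝ) : ℂ) * Complex.exp ((2 * Real.pi * (q.2 : ℝ) : ℝ) * Complex.I),
      hmem q⟩ with hΦ
  have hcontΦ : Continuous Φ := by
    apply Continuous.subtype_mk
    fun_prop
  have hsurj : Function.Surjective Φ := by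
    rintro ⟨w, hw⟩
    rcases eq_or_ne w s with rfl | hne
    · exact ⟨(1, 0), by simp [hΦ, Subtype.ext_iff]⟩
    · have hv : w - s ≠ 0 := sub_ne_zero.mpr hne
      have habs : 0 < ‖w - s‖ := by simpa using hv
      have hle : ‖w - s‖ ≤ ε := by
        rw [← Complex.dist_eq]; exact mem_closedBall.mp hw
      have hσ : 1 - ‖w - s‖ / ε ∈ Set.Icc (0:ℝ) 1 := by
        constructor
        · have : ‖w - s‖ / ε ≤ 1 := by
            rw [div_le_one hε]; exact hle
          linarith
        · have : 0 < ‖w - s‖ / ε := div_pos habs hε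
          linarith
      refine ⟨(⟨_, hσ⟩, ⟨afrac (w - s), afrac_mem _⟩), ?_⟩
      rw [hΦ, Subtype.ext_iff]
      have : ε * (1 - (1 - ‖w - s‖ / ε)) = ‖w - s‖ := by
        field_simp
        ring
      simp only [this]
      have := exp_afrac (w - s)
      simp only [this]
      ring
  have hq : Topology.IsQuotientMap Φ :=
    IsClosedMap.isQuotientMap (hcontΦ.isClosedMap) hcontΦ hsurj
  rw [hq.continuous_iff]
  have hcomp : ((closedBall s ε).domRestrict
      (fun w : ℂ => A (pj (1 - dist w s / ε), pj (afrac (w - s))))) ∘ Φ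
      = fun q : I × I => A q := by
    funext q
    obtain ⟨sg, θ⟩ := q
    simp only [Function.comp_apply, Set.domRestrict_apply, hΦ]
    have h1 : 0 ≤ ε * (1 - (sg : ℝ)) := by
      have := sg.2.2; have := sg.2.1; nlinarith
    have hdist : dist (s + ((ε * (1 - (sg : ℝ)) : ℝ) : ℂ) *
        Complex.exp ((2 * Real.pi * (θ : ℝ) : ℝ) * Complex.I)) s = ε * (1 - (sg : ℝ)) := by
      rw [Complex.dist_eq]
      calc ‖_‖ = ‖(((ε * (1 - (sg : ℝ)) : ℝ) : ℂ) *
          Complex.exp ((2 * Real.pi * (θ : ℝ) : ℝ) * Complex.I))‖ := by ring_nf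
        _ = ε * (1 - (sg : ℝ)) := by
            rw [norm_mul, Complex.norm_exp_ofReal_mul_I, Complex.norm_real, Real.norm_eq_abs,
              _root_.abs_of_nonneg h1, mul_one]
    rw [hdist]
    have hfst : pj (1 - ε * (1 - (sg : ℝ)) / ε) = sg := by
      have : 1 - ε * (1 - (sg : ℝ)) / ε = (sg : ℝ) := by field_simp; ring
      rw [this, pj_coe]
    rw [hfst]
    have hsub : s + ((ε * (1 - (sg : ℝ)) : ℝ) : ℂ) *
        Complex.exp ((2 * Real.pi * (θ : ℝ) : ℝ) * Complex.I) - s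
        = ((ε * (1 - (sg : ℝ)) : ℝ) : ℂ) *
        Complex.exp ((2 * Real.pi * (θ : ℝ) : ℝ) * Complex.I) := by ring
    rw [hsub]
    rcases eq_or_lt_of_le sg.2.2 with hσ1 | hσ1
    · -- σ = 1 : center
      have hσ1' : sg = 1 := Subtype.ext hσ1
      have : ε * (1 - (sg : ℝ)) = 0 := by rw [hσ1]; ring
      rw [this]
      simp only [Complex.ofReal_zero, zero_mul, afrac_zero, pj_zero]
      rw [hσ1']
      exact hcenter 0 θ
    · -- σ < 1
      have hr : 0 < ε * (1 - (sg : ℝ)) := by nlinarith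
      rw [afrac_r_exp _ _ hr]
      rcases eq_or_lt_of_le θ.2.2 with hθ1 | hθ1
      · have hθ1' : θ = 1 := Subtype.ext hθ1
        rw [hθ1']
        norm_num [pj_zero]
        exact hper sg
      · rw [Int.fract_eq_self.mpr ⟨θ.2.1, hθ1⟩, pj_coe]
  rw [hcomp]
  exact A.continuous
section FreeNull

open ContinuousMap

variable {G : Type*} [TopologicalSpace G] [Group G] [IsTopologicalGroup G] [SimplyConnectedSpace G]

set_option maxHeartbeats 2000000 in
lemma free_nullhomotopy (S : Finset ℂ) (f : C({w : ℂ // w ∉ S}, G)) :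
    Nonempty (ContinuousMap.Homotopy f (ContinuousMap.const {w : ℂ // w ∉ S} (1 : G))) := by
  classical
  obtain ⟨ε, hε, hgap⟩ := exists_gap S
  -- uniqueness of nearby puncture
  have huniq : ∀ (w : ℂ) (s s' : ℂ), s ∈ S → s' ∈ S → dist w s ≤ ε → dist w s' < ε → s' = s := by
    intro w s s' hs hs' h1 h2
    by_contra hne
    have h3 := hgap s hs s' hs' (fun he => hne (he ▸ rfl))
    have h4 : dist s s' ≤ dist w s + dist w s' := by
      rw [dist_comm w s]; exact dist_triangle s w s'
    linarith
  have hnotin : ∀ w : ℂ, (∀ s ∈ S, ε ≤ dist w s) → w ∉ S := by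
    intro w h hw
    have := h w hw
    simp only [dist_self] at this
    linarith
  have hmem2 : ∀ (w : ℂ) (s : ℂ), s ∈ S → 0 < dist w s → dist w s ≤ ε → w ∉ S := by
    intro w s hs h0 h1 hw
    have hne : w ≠ s := fun he => by rw [he, dist_self] at h0; exact lt_irrefl _ h0
    have := hgap w hw s hs hne
    linarith
  -- the punctured circle points
  have hptval : ∀ (s : ℂ) (θ : ℝ),
      dist ((s : ℂ) + (ε : ℂ) * Complex.exp ((2 * Real.pi * θ : ℝ) * Complex.I)) s = ε := by
    intro s θ
    rw [Complex.dist_eq]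
    have h1 : (s : ℂ) + (ε : ℂ) * Complex.exp ((2 * Real.pi * θ : ℝ) * Complex.I) - s
        = (ε : ℂ) * Complex.exp ((2 * Real.pi * θ : ℝ) * Complex.I) := by ring
    rw [h1, norm_mul, Complex.norm_exp_ofReal_mul_I, Complex.norm_real, Real.norm_eq_abs, abs_of_pos hε, mul_one]
  have hptmem : ∀ (s : ℂ), s ∈ S → ∀ (θ : ℝ),
      (s : ℂ) + (ε : ℂ) * Complex.exp ((2 * Real.pi * θ : ℝ) * Complex.I) ∉ S := fun s hs θ =>
    hmem2 _ s hs (by rw [hptval]; exact hε) (le_of_eq (hptval s θ))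
  have hfptmem : ∀ (s : ℂ), s ∈ S → ((s + ε : ℂ)) ∉ S := by
    intro s hs
    have := hptmem s hs 0
    simpa using this
  set ι := {s : ℂ // s ∈ S} with hι
  set fpt : ι → G := fun s => f ⟨(s : ℂ) + ε, hfptmem s s.2⟩ with hfpt
  set lp : (s : ι) → Path (fpt s) (fpt s) := fun s =>
    { toFun := fun θ => f ⟨(s : ℂ) + (ε : ℂ) *
        Complex.exp ((2 * Real.pi * (θ : ℝ) : ℝ) * Complex.I), hptmem s s.2 (θ : ℝ)⟩
      continuous_toFun := by
        apply f.continuous.comp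
        apply Continuous.subtype_mk
        fun_prop
      source' := by
        apply congrArg f
        apply Subtype.ext
        show (s : ℂ) + (ε : ℂ) * Complex.exp ((2 * Real.pi * ((0 : I) : ℝ) : ℝ) * Complex.I)
            = (s : ℂ) + ε
        norm_num
      target' := by
        apply congrArg f
        apply Subtype.ext
        show (s : ℂ) + (ε : ℂ) * Complex.exp ((2 * Real.pi * ((1 : I) : ℝ) : ℝ) * Complex.I)
            = (s : ℂ) + ε
        norm_num [Complex.exp_two_pi_mul_I] } with hlp
  set A : (s : ι) → Path.Homotopy (lp s) (Path.refl (fpt s)) := fun s =>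
    (SimplyConnectedSpace.paths_homotopic (lp s) (Path.refl (fpt s))).some with hA
  set Ac : ι → C(I × I, G) := fun s => (A s).toHomotopy.toContinuousMap with hAc
  have hAc_app : ∀ (s : ι) (q : I × I), Ac s q = A s q := fun s q => rfl
  have hA0 : ∀ (s : ι) (θ : I), Ac s (0, θ) = lp s θ := fun s θ =>
    (A s).toHomotopy.apply_zero θ
  have hA1 : ∀ (s : ι) (θ : I), Ac s (1, θ) = fpt s := fun s θ =>
    (A s).toHomotopy.apply_one θ
  have hAs : ∀ (s : ι) (t : I), Ac s (t, 0) = fpt s := fun s t => (A s).source t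
  have hAt : ∀ (s : ι) (t : I), Ac s (t, 1) = fpt s := fun s t => (A s).target t
  -- the cone extension over each disk
  set cone : ι → ℂ → G := fun s w => Ac s (pj (1 - dist w (s : ℂ) / ε), pj (afrac (w - s))) with hcone
  -- the global extension Fhat
  set Fhat : ℂ → G := fun w =>
    if h : ∃ s ∈ S, dist w s < ε then cone ⟨h.choose, h.choose_spec.1⟩ w
    else f ⟨w, hnotin w (fun s hs => le_of_not_gt (fun hc => h ⟨s, hs, hc⟩))⟩ with hFhat
  have hF_out : ∀ (w : ℂ) (hw : ∀ s ∈ S, ε ≤ dist w s), Fhat w = f ⟨w, hnotin w hw⟩ := by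
    intro w hw
    have hne : ¬∃ s ∈ S, dist w s < ε := by
      rintro ⟨s, hs, hlt⟩
      exact absurd (hw s hs) (not_le.mpr hlt)
    simp only [hFhat, dif_neg hne]
  -- cone agrees with f on the boundary circle
  have hcone_bd : ∀ (s : ι) (w : ℂ), dist w (s : ℂ) = ε → (hwS : w ∉ S) →
      cone s w = f ⟨w, hwS⟩ := by
    intro s w hd hwS
    rw [hcone]
    simp only
    rw [hd, div_self hε.ne', sub_self, pj_zero, hA0]
    have hafr : pj (afrac (w - s)) = ⟨afrac (w - s), afrac_mem _⟩ :=
      Set.projIcc_of_mem zero_le_one (afrac_mem _)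
    rw [hlp]
    simp only [Path.coe_mk_mk, hafr]
    apply congrArg f
    apply Subtype.ext
    show (s : ℂ) + (ε : ℂ) * Complex.exp ((2 * Real.pi * afrac (w - s) : ℝ) * Complex.I) = w
    have hthis := exp_afrac (w - (s : ℂ))
    have habs : ‖w - (s : ℂ)‖ = ε := by rw [← Complex.dist_eq]; exact hd
    rw [habs] at hthis
    linear_combination hthis
  have hF_cone : ∀ (s : ι) (w : ℂ), dist w (s : ℂ) ≤ ε → Fhat w = cone s w := by
    intro s w hle
    by_cases h : ∃ t ∈ S, dist w t < ε
    · simp only [hFhat, dif_pos h]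
      have : h.choose = (s : ℂ) := huniq w s h.choose s.2 h.choose_spec.1 hle h.choose_spec.2
      congr 1
      exact Subtype.ext this
    · simp only [hFhat, dif_neg h]
      have hge : ∀ t ∈ S, ε ≤ dist w t := fun t ht => le_of_not_gt (fun hc => h ⟨t, ht, hc⟩)
      have hd : dist w (s : ℂ) = ε := le_antisymm hle (hge s s.2)
      exact (hcone_bd s w hd _).symm
  -- continuity of Fhat
  have hFcont : Continuous Fhat := by
    apply LocallyFinite.continuous (f := fun o : Option ι => o.elim
        {w : ℂ | ∀ s ∈ S, ε ≤ dist w s} (fun s => Metric.closedBall (s : ℂ) ε))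
    · exact locallyFinite_of_finite _
    · ext w
      simp only [Set.mem_iUnion, Set.mem_univ, iff_true]
      by_cases h : ∃ s ∈ S, dist w s < ε
      · obtain ⟨s, hs, hlt⟩ := h
        exact ⟨some ⟨s, hs⟩, by simpa [Metric.mem_closedBall] using hlt.le⟩
      · exact ⟨none, fun s hs => le_of_not_gt (fun hc => h ⟨s, hs, hc⟩)⟩
    · rintro (_ | s)
      · have : {w : ℂ | ∀ s ∈ S, ε ≤ dist w s} = ⋂ s ∈ S, {w : ℂ | ε ≤ dist w s} := by
          ext w; simp
        rw [Option.elim, this]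
        exact isClosed_biInter fun s hs => isClosed_le continuous_const (by fun_prop)
      · exact Metric.isClosed_closedBall
    · rintro (_ | s)
      · rw [continuousOn_iff_continuous_restrict]
        have : Set.domRestrict (Option.elim none {w : ℂ | ∀ s ∈ S, ε ≤ dist w s}
            (fun s : ι => Metric.closedBall (s : ℂ) ε)) Fhat
            = fun w => f ⟨w.1, hnotin w.1 w.2⟩ := by
          funext w
          exact hF_out w.1 w.2
        rw [this]
        exact f.continuous.comp (Continuous.subtype_mk continuous_subtype_val _)
      · apply ContinuousOn.congr (cone_continuousOn (s : ℂ) ε hε (Ac s)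
          (fun sg => (hAs s sg).trans (hAt s sg).symm)
          (fun θ θ' => (hA1 s θ).trans (hA1 s θ').symm))
        intro w hw
        exact hF_cone s w (Metric.mem_closedBall.mp hw)
  -- the radial retraction pushing the punctured disks onto their boundary circles
  set Cs := {w : ℂ // w ∉ S} with hCs
  set R : I × Cs → ℂ := fun q =>
    if h : ∃ s ∈ S, dist (q.2 : ℂ) s < ε then
      h.choose + ((q.2 : ℂ) - h.choose) *
        (((1 - (q.1 : ℝ)) + (q.1 : ℝ) * (ε / dist (q.2 : ℂ) h.choose) : ℝ) : ℂ)
    else (q.2 : ℂ) with hR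
  have hdpos : ∀ (c : Cs) (s : ℂ), s ∈ S → 0 < dist (c : ℂ) s := by
    intro c s hs
    rcases eq_or_lt_of_le (dist_nonneg : (0:ℝ) ≤ dist (c : ℂ) s) with h | h
    · exact absurd (dist_eq_zero.mp h.symm ▸ hs) c.2
    · exact h
  have hscale : ∀ (w s : ℂ) (r : ℝ), 0 ≤ r → dist (s + (w - s) * (r : ℂ)) s = dist w s * r := by
    intro w s r hr
    rw [Complex.dist_eq, Complex.dist_eq]
    have h1 : s + (w - s) * (r : ℂ) - s = (w - s) * (r : ℂ) := by ring
    rw [h1, norm_mul, Complex.norm_real, Real.norm_eq_abs, _root_.abs_of_nonneg hr]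
  have hR_out : ∀ (t : I) (c : Cs), (∀ s ∈ S, ε ≤ dist (c : ℂ) s) → R (t, c) = (c : ℂ) := by
    intro t c hc
    have hne : ¬∃ s ∈ S, dist (c : ℂ) s < ε := by
      rintro ⟨s, hs, hlt⟩; exact absurd (hc s hs) (not_le.mpr hlt)
    simp only [hR, dif_neg hne]
  have hR_in : ∀ (t : I) (c : Cs) (s : ℂ), s ∈ S → dist (c : ℂ) s ≤ ε →
      R (t, c) = s + ((c : ℂ) - s) *
        (((1 - (t : ℝ)) + (t : ℝ) * (ε / dist (c : ℂ) s) : ℝ) : ℂ) := by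
    intro t c s hs hle
    by_cases h : ∃ u ∈ S, dist (c : ℂ) u < ε
    · simp only [hR, dif_pos h]
      have : h.choose = s := huniq (c : ℂ) s h.choose hs h.choose_spec.1 hle h.choose_spec.2
      rw [this]
    · simp only [hR, dif_neg h]
      have hge : ∀ u ∈ S, ε ≤ dist (c : ℂ) u := fun u hu => le_of_not_gt (fun hc => h ⟨u, hu, hc⟩)
      have hd : dist (c : ℂ) s = ε := le_antisymm hle (hge s hs)
      rw [hd, div_self hε.ne']
      have : ((1 - (t : ℝ)) + (t : ℝ) * 1 : ℝ) = 1 := by ring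
      rw [this]
      push_cast
      ring
  -- basic facts about the scaling factor
  have hfacts : ∀ (t : I) (c : Cs) (s : ℂ), s ∈ S → dist (c : ℂ) s ≤ ε →
      dist (R (t, c)) s = dist (c : ℂ) s * ((1 - (t : ℝ)) + (t : ℝ) * (ε / dist (c : ℂ) s)) ∧
      0 < dist (R (t, c)) s ∧ dist (R (t, c)) s ≤ ε := by
    intro t c s hs hle
    have hd0 : 0 < dist (c : ℂ) s := hdpos c s hs
    have ht0 : 0 ≤ (t : ℝ) := t.2.1
    have ht1 : (t : ℝ) ≤ 1 := t.2.2
    have hεd : 1 ≤ ε / dist (c : ℂ) s := (one_le_div hd0).mpr hle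
    have hρ1 : 1 ≤ (1 - (t : ℝ)) + (t : ℝ) * (ε / dist (c : ℂ) s) := by nlinarith
    have hρ0 : 0 ≤ (1 - (t : ℝ)) + (t : ℝ) * (ε / dist (c : ℂ) s) := by linarith
    have hρ2 : (1 - (t : ℝ)) + (t : ℝ) * (ε / dist (c : ℂ) s) ≤ ε / dist (c : ℂ) s := by
      nlinarith
    have hdist : dist (R (t, c)) s
        = dist (c : ℂ) s * ((1 - (t : ℝ)) + (t : ℝ) * (ε / dist (c : ℂ) s)) := by
      rw [hR_in t c s hs hle]
      exact hscale _ _ _ hρ0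
    refine ⟨hdist, by rw [hdist]; nlinarith, ?_⟩
    rw [hdist]
    calc dist (c : ℂ) s * ((1 - (t : ℝ)) + (t : ℝ) * (ε / dist (c : ℂ) s))
        ≤ dist (c : ℂ) s * (ε / dist (c : ℂ) s) := by nlinarith
      _ = ε := by field_simp
  have hR_mem : ∀ (q : I × Cs), R q ∉ S := by
    rintro ⟨t, c⟩
    by_cases h : ∃ s ∈ S, dist (c : ℂ) s < ε
    · obtain ⟨s, hs, hlt⟩ := h
      obtain ⟨_, h1, h2⟩ := hfacts t c s hs hlt.le
      exact hmem2 _ s hs h1 h2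
    · have hge : ∀ u ∈ S, ε ≤ dist (c : ℂ) u := fun u hu => le_of_not_gt (fun hc => h ⟨u, hu, hc⟩)
      rw [hR_out t c hge]
      exact c.2
  have hR_far : ∀ (c : Cs), ∀ u ∈ S, ε ≤ dist (R (1, c)) u := by
    intro c u hu
    by_cases h : ∃ s ∈ S, dist (c : ℂ) s < ε
    · obtain ⟨s, hs, hlt⟩ := h
      obtain ⟨h0, h1, h2⟩ := hfacts 1 c s hs hlt.le
      have hd0 : 0 < dist (c : ℂ) s := hdpos c s hs
      have hds : dist (R (1, c)) s = ε := by
        rw [h0]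
        rw [show ((1 : I) : ℝ) = 1 from rfl]
        field_simp
        ring
      by_cases hus : u = s
      · rw [hus, hds]
      · have := hgap u hu s hs hus
        have htri : dist u s ≤ dist (R (1, c)) u + dist (R (1, c)) s := by
          rw [dist_comm (R (1,c)) u]
          exact dist_triangle u (R (1,c)) s
        rw [dist_comm] at htri
        rw [hds] at htri
        rw [dist_comm] at this
        linarith [htri, this]
    · have hge : ∀ v ∈ S, ε ≤ dist (c : ℂ) v := fun v hv => le_of_not_gt (fun hc => h ⟨v, hv, hc⟩)
      rw [hR_out 1 c hge]
      exact hge u hu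
  have hR_zero : ∀ (c : Cs), R (0, c) = (c : ℂ) := by
    intro c
    by_cases h : ∃ s ∈ S, dist (c : ℂ) s < ε
    · obtain ⟨s, hs, hlt⟩ := h
      rw [hR_in 0 c s hs hlt.le]
      push_cast
      ring
    · exact hR_out 0 c (fun u hu => le_of_not_gt (fun hc => h ⟨u, hu, hc⟩))
  -- continuity of R
  have hR_cont : Continuous R := by
    apply LocallyFinite.continuous (f := fun o : Option ι => o.elim
        {q : I × Cs | ∀ s ∈ S, ε ≤ dist (q.2 : ℂ) s}
        (fun s => {q : I × Cs | dist (q.2 : ℂ) (s : ℂ) ≤ ε}))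
    · exact locallyFinite_of_finite _
    · ext q
      simp only [Set.mem_iUnion, Set.mem_univ, iff_true]
      by_cases h : ∃ s ∈ S, dist (q.2 : ℂ) s < ε
      · obtain ⟨s, hs, hlt⟩ := h
        exact ⟨some ⟨s, hs⟩, hlt.le⟩
      · exact ⟨none, fun s hs => le_of_not_gt (fun hc => h ⟨s, hs, hc⟩)⟩
    · rintro (_ | s)
      · have : (Option.elim none {q : I × Cs | ∀ s ∈ S, ε ≤ dist (q.2 : ℂ) s}
            (fun s : ι => {q : I × Cs | dist (q.2 : ℂ) (s : ℂ) ≤ ε}))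
            = ⋂ s ∈ S, {q : I × Cs | ε ≤ dist (q.2 : ℂ) s} := by
          ext q; simp
        rw [this]
        refine isClosed_biInter fun s hs => isClosed_le continuous_const ?_
        exact (continuous_subtype_val.comp continuous_snd).dist continuous_const
      · exact isClosed_le ((continuous_subtype_val.comp continuous_snd).dist continuous_const)
          continuous_const
    · rintro (_ | s)
      · apply ContinuousOn.congr ((continuous_subtype_val.comp continuous_snd).continuousOn)
        intro q hq
        exact hR_out q.1 q.2 hq
      · refine ContinuousOn.congr (f := fun q : I × Cs => (s : ℂ) + ((q.2 : ℂ) - (s : ℂ)) *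
          ((((1 - (q.1 : ℝ)) + (q.1 : ℝ) * (ε / dist (q.2 : ℂ) (s : ℂ))) : ℝ) : ℂ)) ?_ ?_
        · apply ContinuousOn.add continuousOn_const
          apply ContinuousOn.mul
          · exact (Continuous.sub (continuous_subtype_val.comp continuous_snd)
              continuous_const).continuousOn
          · apply Continuous.comp_continuousOn Complex.continuous_ofReal
            apply ContinuousOn.add
            · exact (Continuous.sub continuous_const
                (continuous_subtype_val.comp continuous_fst)).continuousOn
            · apply ContinuousOn.mul (continuous_subtype_val.comp continuous_fst).continuousOn
              apply ContinuousOn.div continuousOn_const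
              · exact ((continuous_subtype_val.comp continuous_snd).dist
                  continuous_const).continuousOn
              · intro q hq
                exact (hdpos q.2 (s : ℂ) s.2).ne'
        · intro q hq
          exact hR_in q.1 q.2 (s : ℂ) s.2 hq
  -- assembling the three homotopy phases
  have hr1cont : Continuous (fun c : Cs => (⟨R (1, c), hR_mem (1, c)⟩ : Cs)) := by
    apply Continuous.subtype_mk
    exact hR_cont.comp (continuous_const.prodMk continuous_id)
  set r1 : C(Cs, Cs) := ⟨fun c => ⟨R (1, c), hR_mem (1, c)⟩, hr1cont⟩ with hr1
  set B1 : ContinuousMap.Homotopy f (f.comp r1) :=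
    { toFun := fun q => f ⟨R q, hR_mem q⟩
      continuous_toFun := f.continuous.comp (Continuous.subtype_mk hR_cont _)
      map_zero_left := fun c => congrArg f (Subtype.ext (hR_zero c))
      map_one_left := fun c => rfl } with hB1
  have hB2zero : ∀ c : Cs, Fhat ((((1 - ((0 : I) : ℝ)) : ℝ) : ℂ) * R (1, c)) = (f.comp r1) c := by
    intro c
    rw [show ((0 : I) : ℝ) = 0 from rfl]
    norm_num
    rw [hF_out (R (1, c)) (hR_far c)]
    exact congrArg f (Subtype.ext rfl)
  have hB2one : ∀ c : Cs,
      Fhat ((((1 - ((1 : I) : ℝ)) : ℝ) : ℂ) * R (1, c)) = ContinuousMap.const Cs (Fhat 0) c := by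
    intro c
    rw [show ((1 : I) : ℝ) = 1 from rfl]
    norm_num
  set B2 : ContinuousMap.Homotopy (f.comp r1) (ContinuousMap.const Cs (Fhat 0)) :=
    { toFun := fun q => Fhat ((((1 - (q.1 : ℝ)) : ℝ) : ℂ) * R (1, q.2))
      continuous_toFun := by
        apply hFcont.comp
        apply Continuous.mul
        · exact Complex.continuous_ofReal.comp
            (continuous_const.sub (continuous_subtype_val.comp continuous_fst))
        · exact hR_cont.comp (continuous_const.prodMk continuous_snd)
      map_zero_left := fun c => hB2zero c
      map_one_left := fun c => hB2one c } with hB2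
  set p : Path (Fhat 0) (1 : G) := (PathConnectedSpace.joined (Fhat 0) (1 : G)).somePath with hp
  set B3 : ContinuousMap.Homotopy (ContinuousMap.const Cs (Fhat 0))
      (ContinuousMap.const Cs (1 : G)) :=
    { toFun := fun q => p q.1
      continuous_toFun := p.continuous.comp continuous_fst
      map_zero_left := fun c => p.source
      map_one_left := fun c => p.target } with hB3
  exact ⟨(B1.trans B2).trans B3⟩

end FreeNull
section RelCorrection

open ContinuousMap

variable {X : Type*} {G : Type*} [TopologicalSpace X] [TopologicalSpace G] [Group G]
  [IsTopologicalGroup G] [SimplyConnectedSpace G]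

set_option maxHeartbeats 1000000 in
lemma rel_correction {ι : Type*} [Fintype ι] (g : C(X, G))
    (E : ContinuousMap.Homotopy g (ContinuousMap.const X (1 : G)))
    (D : ι → Set X) (x₀ : ι → X) (hx₀ : ∀ i, x₀ i ∈ D i)
    (ρ : ι → C(X, I)) (hρ1 : ∀ i, ∀ x ∈ D i, ρ i x = 1)
    (hρ0 : ∀ i j, i ≠ j → ∀ x ∈ D j, ρ i x = 0)
    (hone : ∀ i, ∀ x ∈ D i, g x = 1)
    (hconst : ∀ (i : ι) (t : I), ∀ x ∈ D i, ∀ y ∈ D i, E (t, x) = E (t, y)) :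
    Nonempty (ContinuousMap.HomotopyRel g (ContinuousMap.const X (1 : G)) (⋃ i, D i)) := by
  classical
  -- the track loops of the base points
  set τ : ι → Path (1 : G) (1 : G) := fun i =>
    { toFun := fun t => E (t, x₀ i)
      continuous_toFun := E.continuous.comp (continuous_id.prodMk continuous_const)
      source' := by simpa using hone i (x₀ i) (hx₀ i)
      target' := by simp } with hτ
  set A : (i : ι) → Path.Homotopy (τ i) (Path.refl (1 : G)) := fun i =>
    (SimplyConnectedSpace.paths_homotopic (τ i) (Path.refl (1 : G))).some with hA
  set Ac : ι → C(I × I, G) := fun i => (A i).toHomotopy.toContinuousMap with hAc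
  have hA0 : ∀ (i : ι) (t : I), Ac i (0, t) = τ i t := fun i t => (A i).toHomotopy.apply_zero t
  have hA1 : ∀ (i : ι) (t : I), Ac i (1, t) = 1 := fun i t => (A i).toHomotopy.apply_one t
  have hAs : ∀ (i : ι) (u : I), Ac i (u, 0) = 1 := fun i u => (A i).source u
  have hAt : ∀ (i : ι) (u : I), Ac i (u, 1) = 1 := fun i u => (A i).target u
  set l : List ι := Finset.univ.toList with hl
  have hlmem : ∀ i : ι, i ∈ l := fun i => by simp [hl]
  have hlnd : l.Nodup := Finset.nodup_toList _
  -- the correction factor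
  set corr : I × X → G := fun q =>
    (l.map (fun i => (Ac i (unitInterval.symm (ρ i q.2), q.1))⁻¹)).prod with hcorr
  have hcorr_cont : Continuous corr := by
    apply list_prod_continuous l
      (fun i (q : I × X) => (Ac i (unitInterval.symm (ρ i q.2), q.1))⁻¹)
    intro i
    apply Continuous.inv
    exact (Ac i).continuous.comp
      ((unitInterval.continuous_symm.comp ((ρ i).continuous.comp continuous_snd)).prodMk
        continuous_fst)
  -- endpoints of the correction
  have hcorr_zero : ∀ x : X, corr (0, x) = 1 := by
    intro x
    apply list_prod_eq_one
    intro i _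
    rw [hAs i _, inv_one]
  have hcorr_one : ∀ x : X, corr (1, x) = 1 := by
    intro x
    apply list_prod_eq_one
    intro i _
    rw [hAt i _, inv_one]
  have hcorr_rel : ∀ (t : I) (i : ι), ∀ x ∈ D i, corr (t, x) = (E (t, x₀ i))⁻¹ := by
    intro t i x hx
    rw [hcorr]
    simp only
    rw [list_prod_eq_single l hlnd _ i (hlmem i)]
    · rw [hρ1 i x hx]
      simp only [unitInterval.symm_one]
      rw [hA0]
      rfl
    · intro j hj hji
      rw [hρ0 j i hji x hx]
      simp only [unitInterval.symm_zero]
      rw [hA1, inv_one]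
  refine ⟨{ toFun := fun q => E q * corr q
            continuous_toFun := E.continuous.mul hcorr_cont
            map_zero_left := ?_
            map_one_left := ?_
            prop' := ?_ }⟩
  · intro x
    show E (0, x) * corr (0, x) = g x
    rw [E.apply_zero, hcorr_zero, mul_one]
  · intro x
    show E (1, x) * corr (1, x) = ContinuousMap.const X (1 : G) x
    rw [E.apply_one, hcorr_one]
    simp
  · intro t x hx
    obtain ⟨s, ⟨i, rfl⟩, hxD⟩ := hx
    show E (t, x) * corr (t, x) = g x
    rw [hcorr_rel t i x hxD, hconst i t x hxD (x₀ i) (hx₀ i), mul_inv_cancel]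
    exact (hone i x hxD).symm

end RelCorrection
open ContinuousMap in
set_option maxHeartbeats 2000000 in
/-- Lemmas 2.6–2.8 combined: for a simply connected topological group `G`,
`C = ℂ ∖ S` and `X = ℝ² × C`, every continuous map `X → G` sending the defect
`ℝ² × z` (with `z` disjoint from `S`) to the identity is homotopic to the constant map `1`
relative to the defect. -/
theorem homotopyRel_defect_to_const_of_simplyConnected (S z : Finset ℂ)
    (hdisj : (↑z : Set ℂ) ∩ (↑S : Set ℂ) = ∅)
    {G : Type*} [TopologicalSpace G] [Group G] [IsTopologicalGroup G] [SimplyConnectedSpace G]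
    (g : C((ℝ × ℝ) × {w : ℂ // w ∉ S}, G))
    (hg : ∀ (p : ℝ × ℝ) (c : {w : ℂ // w ∉ S}), (c : ℂ) ∈ z → g (p, c) = 1) :
    Nonempty (ContinuousMap.HomotopyRel g
      (ContinuousMap.const ((ℝ × ℝ) × {w : ℂ // w ∉ S}) 1)
      ((Set.univ : Set (ℝ × ℝ)) ×ˢ {c : {w : ℂ // w ∉ S} | (c : ℂ) ∈ z})) := by
  classical
  have hzs : ∀ ζ ∈ z, ζ ∉ S := by
    intro ζ hζ hS
    have : ζ ∈ ((↑z : Set ℂ) ∩ (↑S : Set ℂ)) := ⟨hζ, hS⟩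
    rw [hdisj] at this
    exact this
  set Cs := {w : ℂ // w ∉ S} with hCs
  -- the restriction of g to the slice `{(0,0)} × C`
  set f : C(Cs, G) := g.comp ⟨fun c => ((((0 : ℝ), (0 : ℝ)) : ℝ × ℝ), c),
    Continuous.prodMk continuous_const continuous_id⟩ with hf
  obtain ⟨B⟩ := free_nullhomotopy S f
  set g1 : C((ℝ × ℝ) × Cs, G) := g.comp ⟨fun x => ((((0 : ℝ), (0 : ℝ)) : ℝ × ℝ), x.2),
    Continuous.prodMk continuous_const continuous_snd⟩ with hg1
  -- stage A : contract the plane factor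
  set HA : ContinuousMap.Homotopy g g1 :=
    { toFun := fun q => g (((1 - (q.1 : ℝ)) • q.2.1, q.2.2))
      continuous_toFun := by
        apply g.continuous.comp
        apply Continuous.prodMk
        · exact Continuous.smul (continuous_const.sub (continuous_subtype_val.comp
            continuous_fst)) (continuous_fst.comp continuous_snd)
        · exact continuous_snd.comp continuous_snd
      map_zero_left := by
        intro x
        show g ((1 - ((0 : I) : ℝ)) • x.1, x.2) = g x
        rw [show ((0 : I) : ℝ) = 0 from rfl]
        norm_num
      map_one_left := by
        intro x
        show g ((1 - ((1 : I) : ℝ)) • x.1, x.2) = g1 x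
        rw [show ((1 : I) : ℝ) = 1 from rfl]
        have h0 : ((1 : ℝ) - 1) • x.1 = (((0 : ℝ), (0 : ℝ)) : ℝ × ℝ) := by
          norm_num
          rfl
        rw [h0]
        rfl } with hHA
  -- stage B : the free nullhomotopy of the slice pulled back
  set Hrest : ContinuousMap.Homotopy g1 (ContinuousMap.const ((ℝ × ℝ) × Cs) (1 : G)) :=
    { toFun := fun q => B (q.1, q.2.2)
      continuous_toFun := B.continuous.comp
        (continuous_fst.prodMk (continuous_snd.comp continuous_snd))
      map_zero_left := fun x => B.apply_zero x.2
      map_one_left := fun x => B.apply_one x.2 } with hHrest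
  set E := HA.trans Hrest with hE
  have hHA_app : ∀ q, HA q = g (((1 - (q.1 : ℝ)) • q.2.1, q.2.2)) := fun q => rfl
  have hHrest_app : ∀ q, Hrest q = B (q.1, q.2.2) := fun q => rfl
  -- E is independent of the plane coordinate along the defect
  have hEind : ∀ (t : I) (x y : (ℝ × ℝ) × Cs), x.2 = y.2 → ((x.2 : Cs) : ℂ) ∈ z →
      E (t, x) = E (t, y) := by
    intro t x y h2 hz
    rw [hE, ContinuousMap.Homotopy.trans_apply, ContinuousMap.Homotopy.trans_apply]
    split_ifs with h
    · rw [hHA_app, hHA_app]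
      simp only
      rw [hg _ x.2 hz, hg _ y.2 (by rw [← h2]; exact hz)]
    · rw [hHrest_app, hHrest_app]
      simp only
      rw [h2]
  -- the defect components
  obtain ⟨δ, hδ, hgapz⟩ := exists_gap z
  set ιz := {ζ : ℂ // ζ ∈ z} with hιz
  set D : ιz → Set ((ℝ × ℝ) × Cs) := fun i =>
    (Set.univ : Set (ℝ × ℝ)) ×ˢ {c : Cs | (c : ℂ) = (i : ℂ)} with hD
  have hset : ((Set.univ : Set (ℝ × ℝ)) ×ˢ {c : Cs | (c : ℂ) ∈ z}) = ⋃ i, D i := by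
    ext x
    simp only [hD, Set.mem_prod, Set.mem_univ, true_and, Set.mem_setOf_eq, Set.mem_iUnion]
    constructor
    · intro hx
      exact ⟨⟨(x.2 : ℂ), hx⟩, rfl⟩
    · rintro ⟨i, hi⟩
      rw [hi]
      exact i.2
  rw [hset]
  have hDmem : ∀ (i : ιz) (x : (ℝ × ℝ) × Cs), x ∈ D i → ((x.2 : Cs) : ℂ) = (i : ℂ) := by
    intro i x hx
    exact hx.2
  apply rel_correction g E D
    (fun i => ((((0 : ℝ), (0 : ℝ)) : ℝ × ℝ), ⟨(i : ℂ), hzs _ i.2⟩))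
    (fun i => by constructor <;> simp)
    (fun i => ⟨fun x => pj (1 - dist ((x.2 : Cs) : ℂ) (i : ℂ) / δ),
      continuous_pj.comp (continuous_const.sub (Continuous.div_const
        (Continuous.dist (continuous_subtype_val.comp continuous_snd) continuous_const) δ))⟩)
  · -- hρ1
    intro i x hx
    simp only [ContinuousMap.coe_mk]
    rw [hDmem i x hx, dist_self]
    norm_num
    exact pj_one
  · -- hρ0
    intro i j hij x hx
    simp only [ContinuousMap.coe_mk]
    rw [hDmem j x hx]
    have hne : (j : ℂ) ≠ (i : ℂ) := fun he => hij (Subtype.ext he).symm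
    have := hgapz (j : ℂ) j.2 (i : ℂ) i.2 hne
    have hle : 1 - dist ((j : ℂ)) ((i : ℂ)) / δ ≤ 0 := by
      rw [sub_nonpos, le_div_iff₀ hδ]
      nlinarith [dist_nonneg (x := (j : ℂ)) (y := (i : ℂ))]
    rw [pj, Set.projIcc_of_le_left _ hle]
    rfl
  · -- hone
    intro i x hx
    have := hDmem i x hx
    obtain ⟨p, c⟩ := x
    exact hg p c (this ▸ i.2)
  · -- hconst
    intro i t x hx y hy
    exact hEind t x y (Subtype.ext ((hDmem i x hx).trans (hDmem i y hy).symm))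
      (by rw [hDmem i x hx]; exact i.2)
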